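/- Let V < 0 be continuous with −V(x) ≥ C⟨x⟩^{-μ}, 0 < μ < 2, and fix R ≥ 1. Then there exists c₂ > 0 such that for all λ with 0 < λ ≤ R⟨x⟩^{-μ/2} and all x ≥ x' with |x| ≥ |x'|: c₂ M₁ ≤ ∫_{x'}^x (λ²−V(s))^{-1/2} ds ≤ M₁, ∫_{x'}^x |V(s)|(λ²−V(s))^{-3/2} ds ≤ M₁, and c₂ M₂ ≤ ∫_{x'}^x |V(s)|(λ²−V(s))^{-5/2} ds ≤ M₂, where M_j = ∫_{x'}^x |V(s)|^{-(2j−1)/2} ds. -/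

import Mathlib

open Set intervalIntegral

/-- Low-energy comparison: for `0 < λ ≤ R⟨x⟩^{-μ/2}`, `x ≥ x'`, `|x| ≥ |x'|`, the
integrals `∫ (λ²-V)^{-1/2}`, `∫ |V|(λ²-V)^{-3/2}`, `∫ |V|(λ²-V)^{-5/2}` are comparable to
the moments `M₁ = ∫|V|^{-1/2}`, `M₂ = ∫|V|^{-3/2}`. -/
theorem low_energy_moment_comparison (μ C R : ℝ) (hμ : μ ∈ Ioo (0:ℝ) 2)
    (hC : 0 < C) (hR : 1 ≤ R)
    (V : ℝ → ℝ) (hVc : Continuous V) (hneg : ∀ x, V x < 0)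
    (hlow : ∀ x : ℝ, C * (1 + x^2) ^ (-(μ/2)) ≤ -V x) :
    ∃ c₂ > (0:ℝ), ∀ (x x' l : ℝ), x' ≤ x → |x'| ≤ |x| →
      0 < l → l ≤ R * (1 + x^2) ^ (-(μ/4)) →
      (c₂ * (∫ s in x'..x, |V s| ^ (-(1:ℝ)/2))
          ≤ ∫ s in x'..x, (l^2 - V s) ^ (-(1:ℝ)/2)) ∧
      ((∫ s in x'..x, (l^2 - V s) ^ (-(1:ℝ)/2))
          ≤ ∫ s in x'..x, |V s| ^ (-(1:ℝ)/2)) ∧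
      ((∫ s in x'..x, |V s| * (l^2 - V s) ^ (-(3:ℝ)/2))
          ≤ ∫ s in x'..x, |V s| ^ (-(1:ℝ)/2)) ∧
      (c₂ * (∫ s in x'..x, |V s| ^ (-(3:ℝ)/2))
          ≤ ∫ s in x'..x, |V s| * (l^2 - V s) ^ (-(5:ℝ)/2)) ∧
      ((∫ s in x'..x, |V s| * (l^2 - V s) ^ (-(5:ℝ)/2))
          ≤ ∫ s in x'..x, |V s| ^ (-(3:ℝ)/2)) := by
  set K : ℝ := 1 + R^2 / C with hK
  have hK1 : (1:ℝ) ≤ K := by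
    have h0 : 0 ≤ R^2 / C := by positivity
    show (1:ℝ) ≤ 1 + R^2 / C
    linarith
  have hKpos : (0:ℝ) < K := lt_of_lt_of_le one_pos hK1
  refine ⟨K ^ (-(5:ℝ)/2), Real.rpow_pos_of_pos hKpos _, ?_⟩
  intro x x' l hxx' habs hl hlR
  have hVpos : ∀ s, 0 < |V s| := fun s => abs_pos.mpr (hneg s).ne
  have hVabs : ∀ s, |V s| = -V s := fun s => abs_of_neg (hneg s)
  -- key pointwise bounds on [x', x]
  have hkey : ∀ s ∈ Icc x' x, |V s| ≤ l^2 - V s ∧ l^2 - V s ≤ K * |V s| := by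
    intro s hs
    have hs1 : |s| ≤ |x| := by
      calc |s| ≤ max |x'| |x| := abs_le_max_abs_abs hs.1 hs.2
        _ = |x| := max_eq_right habs
    have hbase : (1:ℝ) + s^2 ≤ 1 + x^2 := by
      nlinarith [sq_abs s, sq_abs x, mul_self_le_mul_self (abs_nonneg s) hs1]
    have hb1 : (0:ℝ) < 1 + s^2 := by positivity
    have hmono : ((1:ℝ) + x^2) ^ (-(μ/2)) ≤ (1 + s^2) ^ (-(μ/2)) :=
      Real.rpow_le_rpow_of_nonpos hb1 hbase (by linarith [hμ.1])
    have hl2 : l^2 ≤ R^2 * (1 + x^2) ^ (-(μ/2)) := by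
      have h1 : l^2 ≤ (R * (1 + x^2) ^ (-(μ/4)))^2 := by
        have := hlR
        nlinarith [hl.le]
      calc l^2 ≤ (R * (1 + x^2) ^ (-(μ/4)))^2 := h1
        _ = R^2 * ((1 + x^2) ^ (-(μ/4)) * (1 + x^2) ^ (-(μ/4))) := by ring
        _ = R^2 * (1 + x^2) ^ (-(μ/2)) := by
            rw [← Real.rpow_add (by positivity)]; ring_nf
    have hVs : C * (1 + s^2) ^ (-(μ/2)) ≤ |V s| := by
      rw [hVabs]; exact hlow s
    have hl2V : l^2 ≤ (R^2 / C) * |V s| := by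
      calc l^2 ≤ R^2 * (1 + x^2) ^ (-(μ/2)) := hl2
        _ ≤ R^2 * (1 + s^2) ^ (-(μ/2)) := by
            apply mul_le_mul_of_nonneg_left hmono (by positivity)
        _ = (R^2 / C) * (C * (1 + s^2) ^ (-(μ/2))) := by field_simp
        _ ≤ (R^2 / C) * |V s| := by
            apply mul_le_mul_of_nonneg_left hVs (by positivity)
    constructor
    · have := hVabs s; nlinarith [sq_nonneg l]
    · have := hVabs s; rw [hK]; nlinarith
  have hLpos : ∀ s, 0 < l^2 - V s := fun s => by nlinarith [hneg s, sq_nonneg l]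
  -- continuity / integrability
  have cV : Continuous fun s => |V s| := hVc.abs
  have cL : Continuous fun s => l^2 - V s := (continuous_const.sub hVc)
  have intg : ∀ p : ℝ, IntervalIntegrable (fun s => |V s| ^ p) MeasureTheory.volume x' x :=
    fun p => (cV.rpow_const (fun s => Or.inl (hVpos s).ne')).intervalIntegrable x' x
  have intf : ∀ p : ℝ, IntervalIntegrable (fun s => (l^2 - V s) ^ p) MeasureTheory.volume x' x :=
    fun p => (cL.rpow_const (fun s => Or.inl (hLpos s).ne')).intervalIntegrable x' x
  have intVf : ∀ p : ℝ, IntervalIntegrable (fun s => |V s| * (l^2 - V s) ^ p)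
      MeasureTheory.volume x' x :=
    fun p => (cV.mul (cL.rpow_const (fun s => Or.inl (hLpos s).ne'))).intervalIntegrable x' x
  -- generic pointwise facts
  have hKrpow : ∀ (p : ℝ) (a : ℝ), 0 < a → (K * a) ^ p = K ^ p * a ^ p := by
    intro p a ha; exact Real.mul_rpow hKpos.le ha.le
  refine ⟨?_, ?_, ?_, ?_, ?_⟩
  · -- c₂ M₁ ≤ ∫ (l²-V)^{-1/2}
    rw [← intervalIntegral.integral_const_mul]
    apply intervalIntegral.integral_mono_on hxx'
      ((intg _).const_mul _) (intf _)
    intro s hs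
    have h2 := (hkey s hs).2
    have hlb : (K * |V s|) ^ (-(1:ℝ)/2) ≤ (l^2 - V s) ^ (-(1:ℝ)/2) :=
      Real.rpow_le_rpow_of_nonpos (hLpos s) h2 (by norm_num)
    rw [hKrpow _ _ (hVpos s)] at hlb
    refine le_trans ?_ hlb
    apply mul_le_mul_of_nonneg_right _ (Real.rpow_nonneg (abs_nonneg _) _)
    exact Real.rpow_le_rpow_of_exponent_le hK1 (by norm_num)
  · -- ∫ (l²-V)^{-1/2} ≤ M₁
    apply intervalIntegral.integral_mono_on hxx' (intf _) (intg _)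
    intro s hs
    exact Real.rpow_le_rpow_of_nonpos (hVpos s) (hkey s hs).1 (by norm_num)
  · -- ∫ |V| (l²-V)^{-3/2} ≤ M₁
    apply intervalIntegral.integral_mono_on hxx' (intVf _) (intg _)
    intro s hs
    have h1 : (l^2 - V s) ^ (-(3:ℝ)/2) ≤ |V s| ^ (-(3:ℝ)/2) :=
      Real.rpow_le_rpow_of_nonpos (hVpos s) (hkey s hs).1 (by norm_num)
    calc |V s| * (l^2 - V s) ^ (-(3:ℝ)/2) ≤ |V s| * |V s| ^ (-(3:ℝ)/2) :=
          mul_le_mul_of_nonneg_left h1 (abs_nonneg _)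
      _ = |V s| ^ (-(1:ℝ)/2) := by
          rw [← Real.rpow_one_add' (abs_nonneg _) (by norm_num)]; norm_num
  · -- c₂ M₂ ≤ ∫ |V| (l²-V)^{-5/2}
    rw [← intervalIntegral.integral_const_mul]
    apply intervalIntegral.integral_mono_on hxx'
      ((intg _).const_mul _) (intVf _)
    intro s hs
    have h2 := (hkey s hs).2
    have hlb : (K * |V s|) ^ (-(5:ℝ)/2) ≤ (l^2 - V s) ^ (-(5:ℝ)/2) :=
      Real.rpow_le_rpow_of_nonpos (hLpos s) h2 (by norm_num)
    rw [hKrpow _ _ (hVpos s)] at hlb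
    have hpow : |V s| * |V s| ^ (-(5:ℝ)/2) = |V s| ^ (-(3:ℝ)/2) := by
      rw [← Real.rpow_one_add' (abs_nonneg _) (by norm_num)]; norm_num
    calc K ^ (-(5:ℝ)/2) * |V s| ^ (-(3:ℝ)/2)
        = |V s| * (K ^ (-(5:ℝ)/2) * |V s| ^ (-(5:ℝ)/2)) := by
          rw [← hpow]; ring
      _ ≤ |V s| * (l^2 - V s) ^ (-(5:ℝ)/2) :=
          mul_le_mul_of_nonneg_left hlb (abs_nonneg _)
  · -- ∫ |V| (l²-V)^{-5/2} ≤ M₂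
    apply intervalIntegral.integral_mono_on hxx' (intVf _) (intg _)
    intro s hs
    have h1 : (l^2 - V s) ^ (-(5:ℝ)/2) ≤ |V s| ^ (-(5:ℝ)/2) :=
      Real.rpow_le_rpow_of_nonpos (hVpos s) (hkey s hs).1 (by norm_num)
    calc |V s| * (l^2 - V s) ^ (-(5:ℝ)/2) ≤ |V s| * |V s| ^ (-(5:ℝ)/2) :=
          mul_le_mul_of_nonneg_left h1 (abs_nonneg _)
      _ = |V s| ^ (-(3:ℝ)/2) := by
          rw [← Real.rpow_one_add' (abs_nonneg _) (by norm_num)]; norm_num
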